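/- The greedy algorithm for set cover, which at each step picks the set covering the maximum number of uncovered elements, produces a cover of size at most H(n)·OPT, where n = |U|, H(n) = ∑_{k=1}^{n} 1/k is the n-th harmonic number, and OPT is the size of a minimum set cover. -/

import Mathlib

/-- Greedy set cover achieves an `H(n)` approximation: if at each step the
greedy choice `G i` covers the maximum number of uncovered elements, and it
first covers `U` after `k` steps, then `k ≤ H(|U|) · OPT`. -/
theorem greedy_harmonic_approximation
    {α : Type*} [DecidableEq α] (U : Finset α) (hU : U.Nonempty)
    (S : Finset (Finset α)) (hcov : ∀ u ∈ U, ∃ A ∈ S, u ∈ A)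
    (G : ℕ → Finset α) (hG : ∀ i, G i ∈ S)
    (cov : ℕ → Finset α)
    (hcovdef : ∀ i, cov i = U.filter (fun u => ∃ j < i, u ∈ G j))
    (hgreedy : ∀ i, cov i ≠ U →
      ∀ A ∈ S, ((A ∩ U) \ cov i).card ≤ ((G i ∩ U) \ cov i).card)
    (k : ℕ) (hk : cov k = U) (hfirst : ∀ j < k, cov j ≠ U)
    (OPT : ℕ)
    (hOPT : IsLeast {n : ℕ | ∃ T : Finset (Finset α), T ⊆ S ∧
      (∀ u ∈ U, ∃ A ∈ T, u ∈ A) ∧ T.card = n} OPT) :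
    (k : ℝ) ≤ (∑ i ∈ Finset.Icc 1 U.card, (1 : ℝ) / i) * OPT := by
  classical
  obtain ⟨⟨T, hTS, hTcov, hTcard⟩, -⟩ := hOPT
  set r : ℕ → ℕ := fun i => (U \ cov i).card with hrdef
  have hcovsub : ∀ i, cov i ⊆ U := fun i => by
    rw [hcovdef]; exact Finset.filter_subset _ _
  have hmono : ∀ i j, i ≤ j → cov i ⊆ cov j := by
    intro i j hij
    rw [hcovdef, hcovdef]
    intro u hu
    simp only [Finset.mem_filter] at hu ⊢
    obtain ⟨huU, l, hl, hul⟩ := hu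
    exact ⟨huU, l, lt_of_lt_of_le hl hij, hul⟩
  have hr0 : r 0 = U.card := by
    have : cov 0 = ∅ := by rw [hcovdef]; simp
    simp [hrdef, this]
  have hrk : r k = 0 := by simp [hrdef, hk]
  have hranti : ∀ i j, i ≤ j → r j ≤ r i := fun i j h =>
    Finset.card_le_card (Finset.sdiff_subset_sdiff (le_refl U) (hmono i j h))
  have hmem : ∀ i u, u ∈ cov i ↔ u ∈ U ∧ ∃ j, j < i ∧ u ∈ G j := by
    intro i u
    rw [hcovdef]
    simp [Finset.mem_filter]
  have hmemsucc : ∀ i u, u ∈ cov (i + 1) ↔ u ∈ cov i ∨ (u ∈ G i ∧ u ∈ U) := by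
    intro i u
    rw [hmem, hmem]
    constructor
    · rintro ⟨huU, j, hj, hu⟩
      rcases Nat.lt_succ_iff_lt_or_eq.1 hj with h | rfl
      · exact Or.inl ⟨huU, j, h, hu⟩
      · exact Or.inr ⟨hu, huU⟩
    · rintro (⟨huU, j, hj, hu⟩ | ⟨hu, huU⟩)
      · exact ⟨huU, j, Nat.lt_succ_of_lt hj, hu⟩
      · exact ⟨huU, i, Nat.lt_succ_self i, hu⟩
  have hrsucc : ∀ i, r (i + 1) + ((G i ∩ U) \ cov i).card = r i := by
    intro i
    have hset : U \ cov (i + 1) = (U \ cov i) \ ((G i ∩ U) \ cov i) := by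
      ext u
      simp only [Finset.mem_sdiff, Finset.mem_inter, hmemsucc, not_or]
      tauto
    have hsub : (G i ∩ U) \ cov i ⊆ U \ cov i :=
      Finset.sdiff_subset_sdiff Finset.inter_subset_right (le_refl _)
    calc r (i + 1) + ((G i ∩ U) \ cov i).card
        = ((U \ cov i) \ ((G i ∩ U) \ cov i)).card + ((G i ∩ U) \ cov i).card := by
          rw [hrdef]; simp only; rw [hset]
      _ = r i := Finset.card_sdiff_add_card_eq_card hsub
  have hcover : ∀ m, cov m ≠ U → r m ≤ OPT * ((G m ∩ U) \ cov m).card := by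
    intro m hm
    have hsub : U \ cov m ⊆ T.biUnion (fun A => (A ∩ U) \ cov m) := by
      intro u hu
      rw [Finset.mem_sdiff] at hu
      obtain ⟨A, hA, huA⟩ := hTcov u hu.1
      simp only [Finset.mem_biUnion, Finset.mem_sdiff, Finset.mem_inter]
      exact ⟨A, hA, ⟨huA, hu.1⟩, hu.2⟩
    calc r m ≤ (T.biUnion (fun A => (A ∩ U) \ cov m)).card := Finset.card_le_card hsub
      _ ≤ ∑ A ∈ T, ((A ∩ U) \ cov m).card := Finset.card_biUnion_le
      _ ≤ ∑ _A ∈ T, ((G m ∩ U) \ cov m).card :=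
          Finset.sum_le_sum (fun A hA => hgreedy m hm A (hTS hA))
      _ = OPT * ((G m ∩ U) \ cov m).card := by
          rw [Finset.sum_const, hTcard, smul_eq_mul]
  have key : ∀ d m, m + d = k →
      (d : ℝ) ≤ (OPT : ℝ) * ∑ t ∈ Finset.Ioc 0 (r m), 1 / (t : ℝ) := by
    intro d
    induction d with
    | zero =>
      intro m _
      simp only [Nat.cast_zero]
      apply mul_nonneg (Nat.cast_nonneg _)
      exact Finset.sum_nonneg fun t _ => by positivity
    | succ d ih =>
      intro m hm
      have hmk : m < k := by omega
      have hmU : cov m ≠ U := hfirst m hmk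
      have hstep := hcover m hmU
      set g := ((G m ∩ U) \ cov m).card with hg
      have hrm : 0 < r m := by
        apply Finset.card_pos.2
        rw [Finset.sdiff_nonempty]
        intro h
        exact hmU (Finset.Subset.antisymm (hcovsub m) h)
      have hcard : (Finset.Ioc (r (m + 1)) (r m)).card = g := by
        rw [Nat.card_Ioc]
        have := hrsucc m
        omega
      have hA : (g : ℝ) * (1 / (r m : ℝ)) ≤ ∑ t ∈ Finset.Ioc (r (m + 1)) (r m), 1 / (t : ℝ) := by
        have h := Finset.sum_le_sum (s := Finset.Ioc (r (m + 1)) (r m))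
          (f := fun _ : ℕ => 1 / (r m : ℝ)) (g := fun t : ℕ => 1 / (t : ℝ))
          (fun t ht => by
            have hmem := Finset.mem_Ioc.1 ht
            have ht0 : (0 : ℝ) < (t : ℝ) := by
              exact_mod_cast Nat.pos_of_ne_zero (by omega)
            exact one_div_le_one_div_of_le ht0 (Nat.cast_le.2 hmem.2))
        simpa [Finset.sum_const, hcard, nsmul_eq_mul] using h
      have hB : (1 : ℝ) ≤ (OPT : ℝ) * ((g : ℝ) * (1 / (r m : ℝ))) := by
        have hrmR : (0 : ℝ) < (r m : ℝ) := by exact_mod_cast hrm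
        rw [show (OPT : ℝ) * ((g : ℝ) * (1 / (r m : ℝ))) = ((OPT : ℝ) * g) / (r m : ℝ) by ring,
          le_div_iff₀ hrmR, one_mul]
        exact_mod_cast hstep
      have h1 : (1 : ℝ) ≤ (OPT : ℝ) * ∑ t ∈ Finset.Ioc (r (m + 1)) (r m), 1 / (t : ℝ) :=
        hB.trans (mul_le_mul_of_nonneg_left hA (Nat.cast_nonneg _))
      have ih' := ih (m + 1) (by omega)
      have hsum := Finset.sum_Ioc_consecutive (fun t : ℕ => 1 / (t : ℝ))
        (Nat.zero_le (r (m + 1))) (hranti m (m + 1) (Nat.le_succ m))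
      push_cast
      calc (d : ℝ) + 1
          ≤ (OPT : ℝ) * ∑ t ∈ Finset.Ioc 0 (r (m + 1)), 1 / (t : ℝ) +
            (OPT : ℝ) * ∑ t ∈ Finset.Ioc (r (m + 1)) (r m), 1 / (t : ℝ) := add_le_add ih' h1
        _ = (OPT : ℝ) * (∑ t ∈ Finset.Ioc 0 (r (m + 1)), 1 / (t : ℝ) +
            ∑ t ∈ Finset.Ioc (r (m + 1)) (r m), 1 / (t : ℝ)) := by ring
        _ = (OPT : ℝ) * ∑ t ∈ Finset.Ioc 0 (r m), 1 / (t : ℝ) := by rw [hsum]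
  have hfin := key k 0 (by omega)
  rw [hr0] at hfin
  rw [mul_comm]
  rw [show Finset.Icc 1 U.card = Finset.Ioc 0 U.card from by rw [← Finset.Icc_add_one_left_eq_Ioc]; rfl]
  exact hfin
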